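/- Every 4-divisible binary linear code of dimension 11 and full length has effective length at least 23. Consequently, if C is an 8-divisible binary [n,12,≥24] code of full length with n ≤ 65 containing a codeword of weight 40, then n ≥ 63. -/
import Mathlib


open Finset

/-- Hamming weight of a binary word. -/
def wt {n : ℕ} (x : Fin n → ZMod 2) : ℕ := hammingNorm x

/-- The dual code of a binary linear code. -/
def dualCode {n : ℕ} (C : Submodule (ZMod 2) (Fin n → ZMod 2)) :
    Submodule (ZMod 2) (Fin n → ZMod 2) where
  carrier := {x | ∀ c ∈ C, ∑ i, x i * c i = 0}
  zero_mem' := by intro c _; simp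
  add_mem' := by
    intro a b ha hb c hc
    have h : ∑ i, (a + b) i * c i = (∑ i, a i * c i) + ∑ i, b i * c i := by
      rw [← Finset.sum_add_distrib]
      exact Finset.sum_congr rfl fun i _ => by simp [add_mul]
    simp only [Set.mem_setOf_eq] at *
    rw [h, ha c hc, hb c hc, add_zero]
  smul_mem' := by
    intro r a ha c hc
    have h : ∑ i, (r • a) i * c i = r * ∑ i, a i * c i := by
      rw [Finset.mul_sum]
      exact Finset.sum_congr rfl fun i _ => by simp [mul_assoc]
    simp only [Set.mem_setOf_eq] at *
    rw [h, ha c hc, mul_zero]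

/-- A code has full (effective) length if every coordinate is in the support of
some codeword. -/
def FullLength {n : ℕ} (C : Submodule (ZMod 2) (Fin n → ZMod 2)) : Prop :=
  ∀ i : Fin n, ∃ c ∈ C, c i ≠ 0

/-- The weight distribution: `wd C i` is the number of codewords of `C` of weight `i`. -/
noncomputable def wd {n : ℕ} (C : Submodule (ZMod 2) (Fin n → ZMod 2)) (i : ℕ) : ℕ :=
  Nat.card {c : Fin n → ZMod 2 // c ∈ C ∧ wt c = i}


section Core

variable {ι : Type*} [Fintype ι]

lemma zmod2_cases : ∀ a : ZMod 2, a = 0 ∨ a = 1 := by decide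

lemma z2 : (1 + 1 : ZMod 2) = 0 := by decide

lemma hn_add_eq (x y : ι → ZMod 2) :
    hammingNorm x + hammingNorm y
      = hammingNorm (x + y) + 2 * (univ.filter fun j => x j ≠ 0 ∧ y j ≠ 0).card := by
  simp only [hammingNorm, Finset.card_filter, Finset.mul_sum, ← Finset.sum_add_distrib]
  refine Finset.sum_congr rfl fun j _ => ?_
  rcases zmod2_cases (x j) with h1 | h1 <;> rcases zmod2_cases (y j) with h2 | h2 <;>
    simp [Pi.add_apply, h1, h2, z2]

lemma sum_eq_cast_hn (x : ι → ZMod 2) : ∑ j, x j = (hammingNorm x : ZMod 2) := by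
  simp only [hammingNorm, Finset.card_filter, Nat.cast_sum]
  refine Finset.sum_congr rfl fun j _ => ?_
  rcases zmod2_cases (x j) with h | h <;> simp [h]

lemma sum_mul_eq_cast (x y : ι → ZMod 2) :
    ∑ j, x j * y j = (((univ.filter fun j => x j ≠ 0 ∧ y j ≠ 0).card : ℕ) : ZMod 2) := by
  simp only [Finset.card_filter, Nat.cast_sum]
  refine Finset.sum_congr rfl fun j _ => ?_
  rcases zmod2_cases (x j) with h1 | h1 <;> rcases zmod2_cases (y j) with h2 | h2 <;>
    simp [h1, h2]

lemma filter_partition (p q : ι → Prop) [DecidablePred p] [DecidablePred q] :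
    (univ.filter fun j => p j).card
      = (univ.filter fun j => p j ∧ q j).card + (univ.filter fun j => p j ∧ ¬ q j).card := by
  classical
  rw [← Finset.card_filter_add_card_filter_not (s := univ.filter fun j => p j) (p := q),
    Finset.filter_filter, Finset.filter_filter]


/-- dual code over a general index type -/
def dualI (D : Submodule (ZMod 2) (ι → ZMod 2)) :
    Submodule (ZMod 2) (ι → ZMod 2) where
  carrier := {x | ∀ c ∈ D, ∑ i, x i * c i = 0}
  zero_mem' := by intro c _; simp
  add_mem' := by
    intro a b ha hb c hc
    have h : ∑ i, (a + b) i * c i = (∑ i, a i * c i) + ∑ i, b i * c i := by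
      rw [← Finset.sum_add_distrib]
      exact Finset.sum_congr rfl fun i _ => by simp [add_mul]
    simp only [Set.mem_setOf_eq] at *
    rw [h, ha c hc, hb c hc, add_zero]
  smul_mem' := by
    intro r a ha c hc
    have h : ∑ i, (r • a) i * c i = r * ∑ i, a i * c i := by
      rw [Finset.mul_sum]
      exact Finset.sum_congr rfl fun i _ => by simp [mul_assoc]
    simp only [Set.mem_setOf_eq] at *
    rw [h, ha c hc, mul_zero]

lemma mem_dualI {D : Submodule (ZMod 2) (ι → ZMod 2)} {x : ι → ZMod 2} :
    x ∈ dualI D ↔ ∀ c ∈ D, ∑ i, x i * c i = 0 := Iff.rfl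

lemma selfOrth {D : Submodule (ZMod 2) (ι → ZMod 2)}
    (hdiv : ∀ c ∈ D, 4 ∣ hammingNorm c) : D ≤ dualI D := by
  intro x hx
  rw [mem_dualI]
  intro c hc
  have h1 := hdiv x hx
  have h2 := hdiv c hc
  have h3 := hdiv _ (D.add_mem hx hc)
  have h4 := hn_add_eq x c
  have h5 : 2 ∣ (univ.filter fun j => x j ≠ 0 ∧ c j ≠ 0).card := by omega
  obtain ⟨k, hk⟩ := h5
  rw [sum_mul_eq_cast, hk]
  push_cast
  have h2z : (2 : ZMod 2) = 0 := by decide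
  rw [h2z, zero_mul]

/-- the standard bilinear pairing as a map to the dual space -/
def beta : (ι → ZMod 2) →ₗ[ZMod 2] Module.Dual (ZMod 2) (ι → ZMod 2) where
  toFun x :=
    { toFun := fun y => ∑ j, x j * y j
      map_add' := fun a b => by
        simp [mul_add, Finset.sum_add_distrib]
      map_smul' := fun r a => by
        simp [Finset.mul_sum, mul_left_comm] }
  map_add' a b := by
    ext y
    simp [add_mul, Finset.sum_add_distrib]
  map_smul' r a := by
    ext y
    simp [Finset.mul_sum, mul_assoc]

variable [DecidableEq ι]

lemma beta_inj : Function.Injective (beta (ι := ι)) := by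
  rw [← LinearMap.ker_eq_bot, LinearMap.ker_eq_bot']
  intro x hx
  funext i
  have h := congrFun (congrArg (fun f => f.toFun) hx) (Pi.single i 1)
  simpa [beta, Pi.single_apply, mul_ite, Finset.sum_ite_eq'] using h

lemma core (D : Submodule (ZMod 2) (ι → ZMod 2))
    (hr : Module.finrank (ZMod 2) D = 11)
    (hdiv : ∀ c ∈ D, 4 ∣ hammingNorm c) : 23 ≤ Fintype.card ι := by
  have hle : D ≤ dualI D := selfOrth hdiv
  -- the injection of the dual code into the dual annihilator
  have hmem : ∀ x : (dualI D), beta (ι := ι) x.1 ∈ Submodule.dualAnnihilator D := by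
    intro x
    rw [Submodule.mem_dualAnnihilator]
    intro w hw
    exact x.2 w hw
  set Φ : (dualI D) →ₗ[ZMod 2] (Submodule.dualAnnihilator D) :=
    LinearMap.codRestrict _ ((beta (ι := ι)).comp (dualI D).subtype) hmem with hΦ
  have hΦinj : Function.Injective Φ := by
    intro a b hab
    have : beta (ι := ι) a.1 = beta (ι := ι) b.1 := congrArg Subtype.val hab
    exact Subtype.ext (beta_inj this)
  have hN : Module.finrank (ZMod 2) (ι → ZMod 2) = Fintype.card ι := Module.finrank_pi _
  have hq : Module.finrank (ZMod 2) (Submodule.dualAnnihilator D)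
      + Module.finrank (ZMod 2) D = Fintype.card ι := by
    rw [← (Subspace.quotEquivAnnihilator D).finrank_eq, Submodule.finrank_quotient_add_finrank, hN]
  have h1 : Module.finrank (ZMod 2) (dualI D)
      ≤ Module.finrank (ZMod 2) (Submodule.dualAnnihilator D) :=
    LinearMap.finrank_le_finrank_of_injective hΦinj
  have h2 : 11 ≤ Module.finrank (ZMod 2) (dualI D) := hr ▸ Submodule.finrank_mono hle
  by_contra hcon
  push_neg at hcon
  have hcard : Fintype.card ι = 22 := by omega
  have heq : D = dualI D :=
    Submodule.eq_of_le_of_finrank_le hle (by omega)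
  -- the all-ones vector
  have hu : (fun _ => 1 : ι → ZMod 2) ∈ dualI D := by
    rw [mem_dualI]
    intro c hc
    have h4 := hdiv c hc
    obtain ⟨k, hk⟩ : 2 ∣ hammingNorm c := by omega
    simp only [one_mul]
    rw [sum_eq_cast_hn, hk]
    push_cast
    have h2z : (2 : ZMod 2) = 0 := by decide
    rw [h2z, zero_mul]
  have hu' := hdiv _ (by rw [heq]; exact hu)
  have : hammingNorm (fun _ => 1 : ι → ZMod 2) = Fintype.card ι := by
    simp [hammingNorm, Finset.card_univ]
  omega

end Core

section Main

lemma hn_restrict {n : ℕ} (c x : Fin n → ZMod 2) :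
    hammingNorm (fun j : {j : Fin n // c j = 0} => x j.1)
      = (univ.filter fun j => x j ≠ 0 ∧ c j = 0).card := by
  rw [hammingNorm]
  refine Finset.card_bij (fun a _ => a.1) ?_ ?_ ?_
  · intro a ha
    simp only [Finset.mem_filter, Finset.mem_univ, true_and] at ha ⊢
    exact ⟨ha, a.2⟩
  · intro a _ b _ h
    exact Subtype.ext h
  · intro b hb
    simp only [Finset.mem_filter, Finset.mem_univ, true_and] at hb
    exact ⟨⟨b, hb.2⟩, by simp [hb.1], rfl⟩

theorem stmt11_aux :
    (∀ (m : ℕ) (D : Submodule (ZMod 2) (Fin m → ZMod 2)),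
      Module.finrank (ZMod 2) D = 11 → (∀ c ∈ D, 4 ∣ hammingNorm c) →
      23 ≤ m) ∧
    (∀ (n : ℕ) (C : Submodule (ZMod 2) (Fin n → ZMod 2)), n ≤ 65 →
      Module.finrank (ZMod 2) C = 12 → (∀ c ∈ C, 8 ∣ hammingNorm c) →
      (∀ c ∈ C, c ≠ 0 → 24 ≤ hammingNorm c) → (∃ c ∈ C, hammingNorm c = 40) → 63 ≤ n) := by
  constructor
  · intro m D hr hdiv
    simpa using core D hr hdiv
  · rintro n C hn65 hrk hdiv hmin ⟨c, hc, hwc⟩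
    classical
    let ρ : (Fin n → ZMod 2) →ₗ[ZMod 2] ({j : Fin n // c j = 0} → ZMod 2) :=
      LinearMap.funLeft (ZMod 2) (ZMod 2) Subtype.val
    have hρ : ∀ x : Fin n → ZMod 2, ρ x = fun j : {j : Fin n // c j = 0} => x j.1 := fun _ => rfl
    -- cardinality of the zero set
    have hcardT : Fintype.card {j : Fin n // c j = 0} + 40 = n := by
      have h := Finset.card_filter_add_card_filter_not (s := (univ : Finset (Fin n)))
        (p := fun j => c j = 0)
      have h2 : Fintype.card {j : Fin n // c j = 0}
          = (univ.filter fun j : Fin n => c j = 0).card := Fintype.card_subtype _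
      have h3 : hammingNorm c = (univ.filter fun j : Fin n => ¬ c j = 0).card := by
        simp [hammingNorm, ne_eq]
      simp only [Finset.card_univ, Fintype.card_fin] at h
      omega
    -- weight bookkeeping
    have hkey : ∀ x : Fin n → ZMod 2, hammingNorm x
        = (univ.filter fun j : Fin n => x j ≠ 0 ∧ c j ≠ 0).card + hammingNorm (ρ x) := by
      intro x
      have hp := filter_partition (ι := Fin n) (fun j => x j ≠ 0) (fun j => c j ≠ 0)
      rw [hρ x, hn_restrict c x, hammingNorm]
      simp only [ne_eq, not_not] at hp ⊢
      convert hp using 3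
    -- the residual code is 4-divisible
    have hdiv4 : ∀ d ∈ C.map ρ, 4 ∣ hammingNorm d := by
      rintro d ⟨x, hx, rfl⟩
      have h8x : 8 ∣ hammingNorm x := hdiv x hx
      have h8xc : 8 ∣ hammingNorm (x + c) := hdiv _ (C.add_mem hx hc)
      have h4 := hn_add_eq x c
      have hk := hkey x
      omega
    -- the kernel of restriction is spanned by c
    let f := ρ.comp C.subtype
    have hker : LinearMap.ker f = Submodule.span (ZMod 2) {(⟨c, hc⟩ : C)} := by
      apply le_antisymm
      · rintro ⟨x, hx⟩ hxk
        have hx0 : ∀ j : Fin n, c j = 0 → x j = 0 := by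
          intro j hj
          have h := congrFun (LinearMap.mem_ker.mp hxk) (⟨j, hj⟩ : {j : Fin n // c j = 0})
          simpa [f, hρ x] using h
        by_cases hxz : x = 0
        · have : (⟨x, hx⟩ : C) = 0 := Subtype.ext hxz
          rw [this]; exact Submodule.zero_mem _
        · have hxc : x = c := by
            by_contra hne
            have hy : x + c ≠ 0 := by
              intro h0
              apply hne
              funext i
              have hz : ∀ a b : ZMod 2, a + b = 0 → a = b := by decide
              exact hz _ _ (congrFun h0 i)
            have h24x : 24 ≤ hammingNorm x := hmin x hx hxz
            have h24y : 24 ≤ hammingNorm (x + c) := hmin _ (C.add_mem hx hc) hy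
            have h4 := hn_add_eq x c
            have ht : (univ.filter fun j : Fin n => x j ≠ 0 ∧ c j ≠ 0).card = hammingNorm x := by
              rw [hammingNorm]
              apply congrArg Finset.card
              apply Finset.filter_congr
              intro j _
              exact ⟨fun h => h.1, fun h => ⟨h, fun hc0 => h (hx0 j hc0)⟩⟩
            omega
          have : (⟨x, hx⟩ : C) = ⟨c, hc⟩ := Subtype.ext hxc
          rw [this]
          exact Submodule.mem_span_singleton_self _
      · rw [Submodule.span_le, Set.singleton_subset_iff]
        have : f ⟨c, hc⟩ = 0 := by
          funext j
          have := j.2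
          simpa [f, hρ c] using this
        exact LinearMap.mem_ker.mpr this
    have hc0 : (⟨c, hc⟩ : C) ≠ 0 := by
      intro h0
      have hcz : c = 0 := congrArg Subtype.val h0
      rw [hcz] at hwc
      simp [hammingNorm] at hwc
    have hkrank : Module.finrank (ZMod 2) (LinearMap.ker f) = 1 := by
      rw [hker]; exact finrank_span_singleton hc0
    have hrange : LinearMap.range f = C.map ρ := by
      rw [LinearMap.range_comp, Submodule.range_subtype]
    have hrn := LinearMap.finrank_range_add_finrank_ker f
    rw [hrange, hkrank, hrk] at hrn
    have hD : Module.finrank (ZMod 2) (C.map ρ) = 11 := by omega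
    have hfin := core (C.map ρ) hD hdiv4
    omega

end Main


theorem stmt11 :
    (∀ (m : ℕ) (D : Submodule (ZMod 2) (Fin m → ZMod 2)),
      Module.finrank (ZMod 2) D = 11 → FullLength D → (∀ c ∈ D, 4 ∣ wt c) →
      23 ≤ m) ∧
    (∀ (n : ℕ) (C : Submodule (ZMod 2) (Fin n → ZMod 2)), n ≤ 65 →
      Module.finrank (ZMod 2) C = 12 → FullLength C → (∀ c ∈ C, 8 ∣ wt c) →
      (∀ c ∈ C, c ≠ 0 → 24 ≤ wt c) → (∃ c ∈ C, wt c = 40) → 63 ≤ n) := by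
  obtain ⟨h1, h2⟩ := stmt11_aux
  exact ⟨fun m D hr _ hdiv => h1 m D hr hdiv,
    fun n C hn hr _ hdiv hmin hex => h2 n C hn hr hdiv hmin hex⟩
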